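/- Let π₁ ∈ [0,1], let P₀, P₁ be probability measures, and set P̃₁ = (1-π₁)P₁ + π₁P₀. Then P₀ is irreducible with respect to P̃₁ if and only if P₀ is irreducible with respect to P₁ and π₁ < 1. -/

import Mathlib

open MeasureTheory

/-- The mixture `(1-a)·P + a·Q` of two measures. -/
noncomputable def mix {X : Type*} [MeasurableSpace X] (a : ℝ) (P Q : Measure X) :
    Measure X :=
  ENNReal.ofReal (1 - a) • P + ENNReal.ofReal a • Q

/-- `G` is irreducible with respect to `H`: no decomposition `G = γ·H + (1-γ)·F'`
with `F'` a probability measure and `0 < γ ≤ 1`. -/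
def Irred {X : Type*} [MeasurableSpace X] (G H : Measure X) : Prop :=
  ¬ ∃ (γ : ℝ) (F' : Measure X), IsProbabilityMeasure F' ∧ 0 < γ ∧ γ ≤ 1 ∧
      G = mix γ F' H

/-- Mutual irreducibility. -/
def MutIrred {X : Type*} [MeasurableSpace X] (P Q : Measure X) : Prop :=
  Irred P Q ∧ Irred Q P

/-- The set of feasible mixture proportions of `H` in `F`. -/
def nuSet {X : Type*} [MeasurableSpace X] (F H : Measure X) : Set ℝ :=
  {α | α ∈ Set.Icc (0:ℝ) 1 ∧
    ∃ G' : Measure X, IsProbabilityMeasure G' ∧ F = mix α G' H}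

/-- `ν*(F,H)`: the maximal proportion of `H` in `F`. -/
noncomputable def nuStar {X : Type*} [MeasurableSpace X] (F H : Measure X) : ℝ :=
  sSup (nuSet F H)

lemma mix_apply' {X : Type*} [MeasurableSpace X] (a : ℝ) (P Q : Measure X) (s : Set X) :
    (mix a P Q) s = ENNReal.ofReal (1 - a) * P s + ENNReal.ofReal a * Q s := by
  simp [mix, Measure.coe_add, Pi.add_apply, Measure.smul_apply, smul_eq_mul]

lemma mix_apply_ne_top {X : Type*} [MeasurableSpace X] (a : ℝ) (P Q : Measure X)
    [IsFiniteMeasure P] [IsFiniteMeasure Q] (s : Set X) : (mix a P Q) s ≠ ⊤ := by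
  rw [mix_apply']
  exact ENNReal.add_ne_top.mpr ⟨ENNReal.mul_ne_top ENNReal.ofReal_ne_top (measure_ne_top _ _),
    ENNReal.mul_ne_top ENNReal.ofReal_ne_top (measure_ne_top _ _)⟩

instance mix.isFiniteMeasure {X : Type*} [MeasurableSpace X] (a : ℝ) (P Q : Measure X)
    [IsFiniteMeasure P] [IsFiniteMeasure Q] : IsFiniteMeasure (mix a P Q) :=
  ⟨(mix_apply_ne_top a P Q Set.univ).lt_top⟩

lemma mix_apply_toReal {X : Type*} [MeasurableSpace X] {a : ℝ} (h0 : 0 ≤ a) (h1 : a ≤ 1)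
    (P Q : Measure X) [IsFiniteMeasure P] [IsFiniteMeasure Q] (s : Set X) :
    ((mix a P Q) s).toReal = (1 - a) * (P s).toReal + a * (Q s).toReal := by
  rw [mix_apply', ENNReal.toReal_add
      (ENNReal.mul_ne_top ENNReal.ofReal_ne_top (measure_ne_top _ _))
      (ENNReal.mul_ne_top ENNReal.ofReal_ne_top (measure_ne_top _ _)),
    ENNReal.toReal_mul, ENNReal.toReal_mul, ENNReal.toReal_ofReal h0,
    ENNReal.toReal_ofReal (by linarith)]

theorem irreducible_wrt_contaminated_iff {X : Type*} [MeasurableSpace X]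
    (π₁ : ℝ) (hπ₁ : π₁ ∈ Set.Icc (0:ℝ) 1)
    (P₀ P₁ : Measure X) [IsProbabilityMeasure P₀] [IsProbabilityMeasure P₁] :
    Irred P₀ (mix π₁ P₁ P₀) ↔ (Irred P₀ P₁ ∧ π₁ < 1) := by
  obtain ⟨hπ0, hπle⟩ := hπ₁
  constructor
  · intro h
    have hπlt : π₁ < 1 := by
      by_contra hc
      have hπ1 : π₁ = 1 := le_antisymm hπle (not_lt.mp hc)
      apply h
      refine ⟨1, P₀, inferInstance, one_pos, le_refl 1, ?_⟩
      subst hπ1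
      have hmQ : mix (1:ℝ) P₁ P₀ = P₀ := by
        simp [mix]
      rw [hmQ]
      simp [mix]
    refine ⟨?_, hπlt⟩
    intro ⟨γ, F', hF', hγ0, hγ1, heq⟩
    apply h
    have hD : 0 < 1 - π₁ + π₁ * γ := by nlinarith
    set δ : ℝ := γ / (1 - π₁ + π₁ * γ) with hδ
    have hδ0 : 0 < δ := div_pos hγ0 hD
    have hδ1 : δ ≤ 1 := by
      rw [hδ, div_le_one hD]; nlinarith
    refine ⟨δ, F', hF', hδ0, hδ1, ?_⟩
    ext s hs
    have hreal : (P₀ s).toReal = (1 - γ) * (F' s).toReal + γ * (P₁ s).toReal := by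
      rw [heq, mix_apply_toReal hγ0.le hγ1]
    rw [← ENNReal.toReal_eq_toReal_iff' (measure_ne_top _ _) (mix_apply_ne_top _ _ _ _),
      mix_apply_toReal hδ0.le hδ1, mix_apply_toReal hπ0 hπle, hreal, hδ]
    have hk : γ / (1 - π₁ + π₁ * γ) * (1 - π₁ + π₁ * γ) = γ := div_mul_cancel₀ _ hD.ne'
    linear_combination ((F' s).toReal - (P₁ s).toReal) * hk
  · intro ⟨h, hπlt⟩
    intro ⟨γ, F', hF', hγ0, hγ1, heq⟩
    apply h
    have hD : 0 < 1 - γ * π₁ := by nlinarith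
    set γ' : ℝ := γ * (1 - π₁) / (1 - γ * π₁) with hγ'
    have hγ'0 : 0 < γ' := div_pos (by nlinarith) hD
    have hγ'1 : γ' ≤ 1 := by
      rw [hγ', div_le_one hD]; nlinarith
    refine ⟨γ', F', hF', hγ'0, hγ'1, ?_⟩
    ext s hs
    have hreal : (P₀ s).toReal = (1 - γ) * (F' s).toReal +
        γ * ((1 - π₁) * (P₁ s).toReal + π₁ * (P₀ s).toReal) :=
      calc (P₀ s).toReal = ((mix γ F' (mix π₁ P₁ P₀)) s).toReal := by rw [← heq]
        _ = _ := by rw [mix_apply_toReal hγ0.le hγ1, mix_apply_toReal hπ0 hπle]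
    rw [← ENNReal.toReal_eq_toReal_iff' (measure_ne_top _ _) (mix_apply_ne_top _ _ _ _),
      mix_apply_toReal hγ'0.le hγ'1, hγ']
    field_simp
    linear_combination hreal
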